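/- arXiv:1108.5844 — 4 statements merged into one kernel-verified Lean document; each statement's English description precedes it below -/
import Mathlib

section
/- Let k₀ ≥ 0 (with k₀ > 0) and let ω : [k₀, ∞) → ℝ be nonnegative and non-increasing. Suppose there are constants γ, β > 0 and a non-decreasing function M : [k₀, ∞) → ℝ with 0 ≤ M(k) ≤ M₀·k^γ for all k ≥ k₀, such that ω(k̂) ≤ M(k)(k̂ − k)^{−γ} ω(k)^{1+β} for all k̂ > k ≥ k₀. Then ω(k*) = 0, where k* = 2k₀(1 + 2^{(1+2β)/β²} M₀^{(1+β)/(βγ)} ω(k₀)^{(1+β)/γ}). -/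
open Filter Topology

theorem stampacchia_lemma (k₀ γ β M₀ : ℝ) (ω M : ℝ → ℝ)
    (hk₀ : 0 < k₀) (hγ : 0 < γ) (hβ : 0 < β)
    (hω_nonneg : ∀ k, k₀ ≤ k → 0 ≤ ω k)
    (hω_mono : ∀ k k', k₀ ≤ k → k ≤ k' → ω k' ≤ ω k)
    (hM_mono : ∀ k k', k₀ ≤ k → k ≤ k' → M k ≤ M k')
    (hM_nonneg : ∀ k, k₀ ≤ k → 0 ≤ M k)
    (hM_bound : ∀ k, k₀ ≤ k → M k ≤ M₀ * k ^ γ)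
    (hrec : ∀ k khat, k₀ ≤ k → k < khat →
      ω khat ≤ M k * (khat - k) ^ (-γ) * (ω k) ^ (1 + β)) :
    ω (2 * k₀ * (1 + 2 ^ ((1 + 2 * β) / β ^ 2) * M₀ ^ ((1 + β) / (β * γ)) *
      (ω k₀) ^ ((1 + β) / γ))) = 0 := by
  have hω₀ : 0 ≤ ω k₀ := hω_nonneg k₀ le_rfl
  have hk₀γ : (0:ℝ) < k₀ ^ γ := Real.rpow_pos_of_pos hk₀ γ
  have hM₀ : 0 ≤ M₀ := by
    have h1 := hM_nonneg k₀ le_rfl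
    have h2 := hM_bound k₀ le_rfl
    nlinarith
  set A := (2:ℝ) ^ ((1 + 2 * β) / β ^ 2) * M₀ ^ ((1 + β) / (β * γ)) * (ω k₀) ^ ((1 + β) / γ) with hA_def
  have hA0 : 0 ≤ A := by
    exact mul_nonneg (mul_nonneg (Real.rpow_nonneg (by norm_num) _)
      (Real.rpow_nonneg hM₀ _)) (Real.rpow_nonneg hω₀ _)
  set K := 2 * k₀ * (1 + A) with hK_def
  have hKpos : 0 < K := by rw [hK_def]; nlinarith
  have hk₀K : k₀ < K := by rw [hK_def]; nlinarith
  have hωK : 0 ≤ ω K := hω_nonneg K (le_of_lt hk₀K)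
  refine le_antisymm ?_ hωK
  rcases eq_or_lt_of_le hω₀ with h0 | hω₀pos
  · calc ω K ≤ ω k₀ := hω_mono k₀ K le_rfl hk₀K.le
      _ = 0 := h0.symm
  rcases eq_or_lt_of_le hM₀ with hM0 | hM₀pos
  · have hMk₀ : M k₀ = 0 := by
      have h2 := hM_bound k₀ le_rfl
      rw [← hM0] at h2
      have h1 := hM_nonneg k₀ le_rfl
      nlinarith
    have h := hrec k₀ K le_rfl hk₀K
    rw [hMk₀] at h
    simpa using h
  have hApos : 0 < A := by
    rw [hA_def]
    exact mul_pos (mul_pos (Real.rpow_pos_of_pos two_pos _)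
      (Real.rpow_pos_of_pos hM₀pos _)) (Real.rpow_pos_of_pos hω₀pos _)
  have h2x : ∀ x : ℝ, (0:ℝ) < 2 ^ x := fun x => Real.rpow_pos_of_pos two_pos x
  -- key power expansion of A
  have hApow : A ^ (-γ) = 2 ^ (-(γ*(1+2*β)/β^2)) * (M₀ ^ (-((1+β)/β)) * (ω k₀) ^ (-(1+β))) := by
    rw [hA_def, Real.mul_rpow (by positivity) (Real.rpow_nonneg hω₀ _),
        Real.mul_rpow (by positivity) (Real.rpow_nonneg hM₀ _),
        ← Real.rpow_mul (by norm_num : (0:ℝ) ≤ 2),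
        ← Real.rpow_mul hM₀, ← Real.rpow_mul hω₀]
    rw [show (1+2*β)/β^2 * (-γ) = -(γ*(1+2*β)/β^2) by ring,
        show (1+β)/(β*γ) * (-γ) = -((1+β)/β) by field_simp,
        show (1+β)/γ * (-γ) = -(1+β) by field_simp]
    ring
  -- levels and bounds
  have hkn_le : ∀ n : ℕ, K * (1 - 2 ^ (-(n:ℝ) - 1)) ≤ K := by
    intro n
    have h := h2x (-(n:ℝ) - 1)
    nlinarith
  have hkn_half : ∀ n : ℕ, K / 2 ≤ K * (1 - 2 ^ (-(n:ℝ) - 1)) := by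
    intro n
    have h1 : (2:ℝ) ^ (-(n:ℝ)-1) ≤ 2 ^ (-1:ℝ) := by
      apply (Real.rpow_le_rpow_left_iff (by norm_num : (1:ℝ) < 2)).2
      have : (0:ℝ) ≤ n := Nat.cast_nonneg n
      linarith
    rw [Real.rpow_neg_one] at h1
    nlinarith
  have hkn_ge : ∀ n : ℕ, k₀ ≤ K * (1 - 2 ^ (-(n:ℝ) - 1)) := by
    intro n
    refine le_trans ?_ (hkn_half n)
    rw [hK_def]; nlinarith
  -- the main induction
  have main : ∀ n : ℕ, ω (K * (1 - 2 ^ (-(n:ℝ) - 1)))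
      ≤ M₀ ^ (-(1/β)) * 2 ^ (-(γ*(1+2*β)/β^2) - (γ/β) * n) := by
    intro n
    induction n with
    | zero =>
      have hz : -((0:ℕ):ℝ) - 1 = -1 := by norm_num
      rw [hz, Real.rpow_neg_one]
      have hkn0 : K * (1 - (2:ℝ)⁻¹) = k₀ * (1 + A) := by
        rw [hK_def]; ring
      have hlt : k₀ < k₀ * (1 + A) := by nlinarith
      have h := hrec k₀ (k₀ * (1 + A)) le_rfl hlt
      have hd : k₀ * (1 + A) - k₀ = k₀ * A := by ring
      rw [hd] at h
      rw [hkn0]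
      push_cast
      rw [mul_zero, sub_zero]
      calc ω (k₀ * (1 + A)) ≤ M k₀ * (k₀ * A) ^ (-γ) * ω k₀ ^ (1+β) := h
        _ ≤ (M₀ * k₀ ^ γ) * (k₀ * A) ^ (-γ) * ω k₀ ^ (1+β) := by
            have h4 : (0:ℝ) ≤ (k₀ * A) ^ (-γ) := Real.rpow_nonneg (by positivity) _
            have h5 : (0:ℝ) ≤ ω k₀ ^ (1+β) := Real.rpow_nonneg hω₀ _
            exact mul_le_mul_of_nonneg_right
              (mul_le_mul_of_nonneg_right (hM_bound k₀ le_rfl) h4) h5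
        _ = M₀ ^ (-(1/β)) * 2 ^ (-(γ*(1+2*β)/β^2)) := by
            rw [Real.mul_rpow hk₀.le hA0, hApow]
            have h1 : k₀ ^ γ * k₀ ^ (-γ) = 1 := by
              rw [← Real.rpow_add hk₀]; norm_num
            have h2 : (ω k₀) ^ (-(1+β)) * (ω k₀) ^ (1+β) = 1 := by
              rw [← Real.rpow_add hω₀pos, show -(1+β)+(1+β) = (0:ℝ) by ring, Real.rpow_zero]
            have h3 : M₀ * M₀ ^ (-((1+β)/β)) = M₀ ^ (-(1/β)) := by
              nth_rewrite 1 [← Real.rpow_one M₀]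
              rw [← Real.rpow_add hM₀pos]
              congr 1
              field_simp
              ring
            calc (M₀ * k₀ ^ γ) * (k₀ ^ (-γ) * (2 ^ (-(γ*(1+2*β)/β^2)) * (M₀ ^ (-((1+β)/β)) * (ω k₀) ^ (-(1+β))))) * ω k₀ ^ (1+β)
                = (M₀ * M₀ ^ (-((1+β)/β))) * (k₀ ^ γ * k₀ ^ (-γ)) * 2 ^ (-(γ*(1+2*β)/β^2)) * ((ω k₀) ^ (-(1+β)) * (ω k₀) ^ (1+β)) := by ring
              _ = M₀ ^ (-(1/β)) * 2 ^ (-(γ*(1+2*β)/β^2)) := by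
                  rw [h1, h2, h3]
                  ring
    | succ n ih =>
      push_cast
      set kn := K * (1 - 2 ^ (-(n:ℝ) - 1)) with hkn
      set kn1 := K * (1 - 2 ^ (-((n:ℝ)+1) - 1)) with hkn1
      have hlt : kn < kn1 := by
        rw [hkn, hkn1]
        have h1 : (2:ℝ) ^ (-((n:ℝ)+1) - 1) < 2 ^ (-(n:ℝ) - 1) := by
          apply (Real.rpow_lt_rpow_left_iff (by norm_num : (1:ℝ) < 2)).2
          linarith
        nlinarith
      have hdiff : kn1 - kn = K * 2 ^ (-(n:ℝ) - 2) := by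
        rw [hkn, hkn1]
        have h : (2:ℝ) ^ (-(n:ℝ) - 1) = 2 ^ (-(n:ℝ) - 2) * 2 := by
          rw [show -(n:ℝ) - 1 = (-(n:ℝ) - 2) + 1 by ring,
              Real.rpow_add_one (by norm_num : (2:ℝ) ≠ 0)]
        rw [show -((n:ℝ)+1) - 1 = -(n:ℝ) - 2 by ring]
        rw [h]; ring
      have hknge : k₀ ≤ kn := hkn_ge n
      have hknle : kn ≤ K := hkn_le n
      have hMkn : M kn ≤ M₀ * K ^ γ := by
        calc M kn ≤ M K := hM_mono kn K hknge hknle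
          _ ≤ M₀ * K ^ γ := hM_bound K hk₀K.le
      have hωkn : 0 ≤ ω kn := hω_nonneg kn hknge
      have h := hrec kn kn1 hknge hlt
      rw [hdiff] at h
      calc ω kn1 ≤ M kn * (K * 2 ^ (-(n:ℝ) - 2)) ^ (-γ) * ω kn ^ (1+β) := h
        _ ≤ (M₀ * K ^ γ) * (K * 2 ^ (-(n:ℝ) - 2)) ^ (-γ) *
            (M₀ ^ (-(1/β)) * 2 ^ (-(γ*(1+2*β)/β^2) - (γ/β) * n)) ^ (1+β) := by
            have h4 : (0:ℝ) ≤ (K * 2 ^ (-(n:ℝ)-2)) ^ (-γ) := Real.rpow_nonneg (by positivity) _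
            have h5 : (0:ℝ) ≤ M₀ ^ (-(1/β)) * 2 ^ (-(γ*(1+2*β)/β^2) - (γ/β) * (n:ℝ)) :=
              (mul_pos (Real.rpow_pos_of_pos hM₀pos _) (h2x _)).le
            refine mul_le_mul (mul_le_mul_of_nonneg_right hMkn h4)
              (Real.rpow_le_rpow hωkn ih (by positivity)) (Real.rpow_nonneg hωkn _) ?_
            have h6 : (0:ℝ) ≤ M₀ * K ^ γ := by positivity
            exact mul_nonneg h6 h4
        _ = M₀ ^ (-(1/β)) * 2 ^ (-(γ*(1+2*β)/β^2) - (γ/β) * ((n:ℝ)+1)) := by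
            rw [Real.mul_rpow hKpos.le (h2x _).le,
                Real.mul_rpow (Real.rpow_nonneg hM₀ _) (h2x _).le,
                ← Real.rpow_mul (by norm_num : (0:ℝ) ≤ 2),
                ← Real.rpow_mul hM₀,
                ← Real.rpow_mul (by norm_num : (0:ℝ) ≤ 2)]
            have h1 : K ^ γ * K ^ (-γ) = 1 := by
              rw [← Real.rpow_add hKpos]; norm_num
            have h3 : M₀ * M₀ ^ (-(1/β) * (1+β)) = M₀ ^ (-(1/β)) := by
              nth_rewrite 1 [← Real.rpow_one M₀]
              rw [← Real.rpow_add hM₀pos]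
              congr 1
              field_simp
              ring
            have h4 : (2:ℝ) ^ ((-(n:ℝ) - 2) * (-γ)) * 2 ^ ((-(γ*(1+2*β)/β^2) - (γ/β) * n) * (1+β))
                = 2 ^ (-(γ*(1+2*β)/β^2) - (γ/β) * ((n:ℝ)+1)) := by
              rw [← Real.rpow_add two_pos]
              congr 1
              field_simp; ring
            calc (M₀ * K ^ γ) * (K ^ (-γ) * 2 ^ ((-(n:ℝ) - 2) * (-γ))) *
                (M₀ ^ (-(1/β) * (1+β)) * 2 ^ ((-(γ*(1+2*β)/β^2) - (γ/β) * n) * (1+β)))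
                = (M₀ * M₀ ^ (-(1/β) * (1+β))) * (K ^ γ * K ^ (-γ)) *
                  (2 ^ ((-(n:ℝ) - 2) * (-γ)) * 2 ^ ((-(γ*(1+2*β)/β^2) - (γ/β) * n) * (1+β))) := by ring
              _ = M₀ ^ (-(1/β)) * 2 ^ (-(γ*(1+2*β)/β^2) - (γ/β) * ((n:ℝ)+1)) := by
                  rw [h1, h3, h4]; ring
  -- pass to the limit
  have hlim : Tendsto (fun n : ℕ => M₀ ^ (-(1/β)) * 2 ^ (-(γ*(1+2*β)/β^2) - (γ/β) * n)) atTop (𝓝 0) := by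
    have h1 : ∀ n : ℕ, M₀ ^ (-(1/β)) * 2 ^ (-(γ*(1+2*β)/β^2) - (γ/β) * n)
        = (M₀ ^ (-(1/β)) * 2 ^ (-(γ*(1+2*β)/β^2))) * ((2:ℝ) ^ (-(γ/β))) ^ (n:ℕ) := by
      intro n
      have e1 : (2:ℝ) ^ (-(γ*(1+2*β)/β^2) - (γ/β)*n) = 2 ^ (-(γ*(1+2*β)/β^2)) * 2 ^ (-(γ/β)*(n:ℝ)) := by
        rw [← Real.rpow_add two_pos]
        congr 1
        ring
      have e2 : (2:ℝ) ^ (-(γ/β)*(n:ℝ)) = ((2:ℝ) ^ (-(γ/β))) ^ (n:ℕ) := by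
        rw [Real.rpow_mul (by norm_num : (0:ℝ) ≤ 2), Real.rpow_natCast]
      rw [e1, e2]
      ring
    simp only [h1]
    have h2 : |(2:ℝ) ^ (-(γ/β))| < 1 := by
      rw [abs_of_pos (h2x _)]
      exact Real.rpow_lt_one_of_one_lt_of_neg one_lt_two (neg_lt_zero.mpr (div_pos hγ hβ))
    simpa using (tendsto_pow_atTop_nhds_zero_of_abs_lt_one h2).const_mul
      (M₀ ^ (-(1/β)) * 2 ^ (-(γ*(1+2*β)/β^2)))
  refine ge_of_tendsto' hlim ?_
  intro n
  exact le_trans (hω_mono _ K (hkn_ge n) (hkn_le n)) (main n)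
end

section
/- For every real x ≥ 0 and every real r ≥ 2, x^r ≤ (1/r²)·x + (r−1)·r^{(2−r)/(r−1)}·x^{r+1}. -/
theorem young_interpolation (x r : ℝ) (hx : 0 ≤ x) (hr : 2 ≤ r) :
    x ^ r ≤ (1 / r ^ 2) * x + (r - 1) * r ^ ((2 - r) / (r - 1)) * x ^ (r + 1) := by
  have hr0 : (0:ℝ) < r := by linarith
  have hr1 : (0:ℝ) < r - 1 := by linarith
  rcases eq_or_lt_of_le hx with h0 | hx0
  · rw [← h0, Real.zero_rpow hr0.ne', Real.zero_rpow (by linarith : r + 1 ≠ 0)]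
    simp
  have hw : 1/r + (r-1)/r = 1 := by field_simp; ring
  have key := Real.geom_mean_le_arith_mean2_weighted (w₁ := 1/r) (w₂ := (r-1)/r)
    (p₁ := x/r) (p₂ := r ^ ((1:ℝ)/(r-1)) * x ^ (r+1))
    (by positivity) (by positivity) (by positivity) (by positivity) hw
  have hL : (x/r) ^ (1/r) * (r ^ ((1:ℝ)/(r-1)) * x ^ (r+1)) ^ ((r-1)/r) = x ^ r := by
    rw [Real.div_rpow hx hr0.le, Real.mul_rpow (by positivity) (by positivity),
      ← Real.rpow_mul hr0.le, ← Real.rpow_mul hx]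
    have e1 : 1/(r-1) * ((r-1)/r) = 1/r := by field_simp
    have e2 : (r+1) * ((r-1)/r) = r - 1/r := by field_simp; ring
    rw [e1, e2]
    have hxy : x ^ (1/r) * x ^ (r - 1/r) = x ^ r := by
      rw [← Real.rpow_add hx0]; ring_nf
    have e4 : (r*r-1)/r = r - 1/r := by field_simp
    field_simp
    rw [sq, e4]
    exact hxy
  have hR : 1/r * (x/r) + (r-1)/r * (r ^ ((1:ℝ)/(r-1)) * x ^ (r+1))
      = (1 / r ^ 2) * x + (r - 1) * r ^ ((2 - r) / (r - 1)) * x ^ (r + 1) := by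
    have e3 : ((2 - r) / (r - 1)) = 1/(r-1) - 1 := by field_simp; ring
    rw [e3, Real.rpow_sub hr0, Real.rpow_one]
    field_simp
  rw [hL, hR] at key
  exact key
end

section
/- Let F : ℝ² → ℝ satisfy |F(n,p)| ≤ c₂(1 + |n| + |p|) for some c₂ > 0 and F(n,p) ≥ 0 for n,p ≥ 0. Let σ > 0 and define R̃(n,p,x) = F(n/(1+σn), p/(1+σp))·( (n/(1+σn))·(p/(1+σp)) − μ_n(x)μ_p(x) ) where 0 ≤ μ_n(x), μ_p(x) ≤ e^{−V_b}. Then for all n, p ≥ 0 and all x, |R̃(n,p,x)| ≤ c₂(1 + 2/σ)·μ_n(x)μ_p(x) + c₂(1/σ + 1/σ²)(n + p). -/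
theorem regularized_rate_linear_growth (F : ℝ → ℝ → ℝ) (c₂ σ Vb : ℝ)
    (hc₂ : 0 < c₂) (hσ : 0 < σ)
    (hF_growth : ∀ n p : ℝ, |F n p| ≤ c₂ * (1 + |n| + |p|))
    (hF_nonneg : ∀ n p : ℝ, 0 ≤ n → 0 ≤ p → 0 ≤ F n p)
    (μn μp : EuclideanSpace ℝ (Fin 3) → ℝ)
    (hμn : ∀ x, 0 ≤ μn x ∧ μn x ≤ Real.exp (-Vb))
    (hμp : ∀ x, 0 ≤ μp x ∧ μp x ≤ Real.exp (-Vb)) :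
    ∀ (n p : ℝ) (x : EuclideanSpace ℝ (Fin 3)), 0 ≤ n → 0 ≤ p →
      |F (n / (1 + σ * n)) (p / (1 + σ * p)) *
        ((n / (1 + σ * n)) * (p / (1 + σ * p)) - μn x * μp x)| ≤
      c₂ * (1 + 2 / σ) * (μn x * μp x) + c₂ * (1 / σ + 1 / σ ^ 2) * (n + p) := by
  intro n p x hn hp
  obtain ⟨hμn0, -⟩ := hμn x
  obtain ⟨hμp0, -⟩ := hμp x
  have h1n : (0:ℝ) < 1 + σ * n := by positivity
  have h1p : (0:ℝ) < 1 + σ * p := by positivity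
  set a := n / (1 + σ * n) with ha
  set b := p / (1 + σ * p) with hb
  have ha0 : 0 ≤ a := by positivity
  have hb0 : 0 ≤ b := by positivity
  have ha1 : a ≤ 1 / σ := by
    rw [ha, div_le_div_iff₀ h1n hσ]; nlinarith
  have han : a ≤ n := by
    rw [ha, div_le_iff₀ h1n]; nlinarith [mul_nonneg hσ.le (mul_nonneg hn hn)]
  have hb1 : b ≤ 1 / σ := by
    rw [hb, div_le_div_iff₀ h1p hσ]; nlinarith
  have hbp : b ≤ p := by
    rw [hb, div_le_iff₀ h1p]; nlinarith [mul_nonneg hσ.le (mul_nonneg hp hp)]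
  set M := μn x * μp x with hM
  have hM0 : 0 ≤ M := mul_nonneg hμn0 hμp0
  have hFb : |F a b| ≤ c₂ * (1 + 2 / σ) := by
    calc |F a b| ≤ c₂ * (1 + |a| + |b|) := hF_growth a b
      _ ≤ c₂ * (1 + 2 / σ) := by
          rw [abs_of_nonneg ha0, abs_of_nonneg hb0]
          have h2 : 2 / σ = 1 / σ + 1 / σ := by ring
          exact mul_le_mul_of_nonneg_left (by rw [h2]; linarith) hc₂.le
  have habs : |a * b - M| ≤ a * b + M := by
    rw [abs_sub_le_iff]
    constructor <;> nlinarith [mul_nonneg ha0 hb0]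
  have hab : a * b ≤ (n + p) / (2 * σ) := by
    rw [le_div_iff₀ (by positivity)]
    have ha1' : a * σ ≤ 1 := (le_div_iff₀ hσ).mp ha1
    have hb1' : b * σ ≤ 1 := (le_div_iff₀ hσ).mp hb1
    nlinarith [mul_le_mul_of_nonneg_left hb1' ha0, mul_le_mul_of_nonneg_left ha1' hb0]
  have key : c₂ * (1 + 2 / σ) * ((n + p) / (2 * σ)) ≤ c₂ * (1 / σ + 1 / σ ^ 2) * (n + p) := by
    rw [← sub_nonneg]
    have hdiff : c₂ * (1 / σ + 1 / σ ^ 2) * (n + p) - c₂ * (1 + 2 / σ) * ((n + p) / (2 * σ))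
        = c₂ * (n + p) * (1 / (2 * σ)) := by
      field_simp
      ring
    rw [hdiff]
    exact mul_nonneg (mul_nonneg hc₂.le (by linarith)) (by positivity)
  calc |F a b * (a * b - M)| = |F a b| * |a * b - M| := abs_mul _ _
    _ ≤ c₂ * (1 + 2 / σ) * (a * b + M) :=
        mul_le_mul hFb habs (abs_nonneg _) (by positivity)
    _ = c₂ * (1 + 2 / σ) * M + c₂ * (1 + 2 / σ) * (a * b) := by ring
    _ ≤ c₂ * (1 + 2 / σ) * M + c₂ * (1 / σ + 1 / σ ^ 2) * (n + p) := by
        have := mul_le_mul_of_nonneg_left hab (le_of_lt (by positivity : (0:ℝ) < c₂ * (1 + 2/σ)))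
        linarith [key]
end

section
/- Let F : ℝ² → ℝ be Lipschitz with constant c₁ (i.e. |F(a₁,b₁) − F(a₂,b₂)| ≤ c₁(|a₁−a₂| + |b₁−b₂|)) and satisfy |F(a,b)| ≤ c₂(1+|a|+|b|). Fix σ > 0 and a point x where 0 ≤ μ_n(x), μ_p(x) ≤ e^{−V_b}. Define G(n,p) = F(n/(1+σn), p/(1+σp))·((n/(1+σn))(p/(1+σp)) − μ_n(x)μ_p(x)). Then for all nonnegative reals n₁,p₁,n₂,p₂: |G(n₁,p₁) − G(n₂,p₂)| ≤ K̃(|n₁−n₂| + |p₁−p₂|), where K̃ = 2c₁e^{−2V_b} + (2c₂/σ)(1 + 2/σ) + 2c₁/σ². -/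
lemma trunc_nonneg' (σ : ℝ) (hσ : 0 < σ) (n : ℝ) (hn : 0 ≤ n) :
    0 ≤ n / (1 + σ * n) := by
  have : 0 < 1 + σ * n := by nlinarith
  positivity

lemma trunc_le' (σ : ℝ) (hσ : 0 < σ) (n : ℝ) (hn : 0 ≤ n) :
    n / (1 + σ * n) ≤ 1 / σ := by
  have hd : 0 < 1 + σ * n := by nlinarith
  rw [div_le_div_iff₀ hd hσ]
  nlinarith

lemma trunc_lip' (σ : ℝ) (hσ : 0 < σ) (n m : ℝ) (hn : 0 ≤ n) (hm : 0 ≤ m) :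
    |n / (1 + σ * n) - m / (1 + σ * m)| ≤ |n - m| := by
  have h1 : 0 < 1 + σ * n := by nlinarith
  have h2 : 0 < 1 + σ * m := by nlinarith
  have heq : n / (1 + σ * n) - m / (1 + σ * m) = (n - m) / ((1 + σ * n) * (1 + σ * m)) := by
    field_simp
    ring
  rw [heq, abs_div, abs_of_pos (by positivity : (0:ℝ) < (1 + σ * n) * (1 + σ * m))]
  apply div_le_self (abs_nonneg _)
  nlinarith [mul_nonneg (mul_nonneg hσ.le hn) (mul_nonneg hσ.le hm), mul_nonneg hσ.le hn, mul_nonneg hσ.le hm]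

theorem regularized_rate_lipschitz (F : ℝ → ℝ → ℝ) (c₁ c₂ σ Vb : ℝ)
    (hc₁ : 0 < c₁) (hc₂ : 0 < c₂) (hσ : 0 < σ)
    (hF_lip : ∀ a₁ b₁ a₂ b₂ : ℝ, |F a₁ b₁ - F a₂ b₂| ≤ c₁ * (|a₁ - a₂| + |b₁ - b₂|))
    (hF_growth : ∀ a b : ℝ, |F a b| ≤ c₂ * (1 + |a| + |b|))
    (μn μp : ℝ) (hμn : 0 ≤ μn ∧ μn ≤ Real.exp (-Vb)) (hμp : 0 ≤ μp ∧ μp ≤ Real.exp (-Vb)) :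
    ∀ n₁ p₁ n₂ p₂ : ℝ, 0 ≤ n₁ → 0 ≤ p₁ → 0 ≤ n₂ → 0 ≤ p₂ →
      |F (n₁ / (1 + σ * n₁)) (p₁ / (1 + σ * p₁)) *
          ((n₁ / (1 + σ * n₁)) * (p₁ / (1 + σ * p₁)) - μn * μp) -
        F (n₂ / (1 + σ * n₂)) (p₂ / (1 + σ * p₂)) *
          ((n₂ / (1 + σ * n₂)) * (p₂ / (1 + σ * p₂)) - μn * μp)| ≤
      (2 * c₁ * Real.exp (-2 * Vb) + (2 * c₂ / σ) * (1 + 2 / σ) + 2 * c₁ / σ ^ 2) *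
        (|n₁ - n₂| + |p₁ - p₂|) := by
  intro n₁ p₁ n₂ p₂ hn1 hp1 hn2 hp2
  set a₁ := n₁ / (1 + σ * n₁) with ha₁
  set a₂ := n₂ / (1 + σ * n₂) with ha₂
  set b₁ := p₁ / (1 + σ * p₁) with hb₁
  set b₂ := p₂ / (1 + σ * p₂) with hb₂
  have ha₁0 : 0 ≤ a₁ := trunc_nonneg' σ hσ n₁ hn1
  have ha₂0 : 0 ≤ a₂ := trunc_nonneg' σ hσ n₂ hn2
  have hb₁0 : 0 ≤ b₁ := trunc_nonneg' σ hσ p₁ hp1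
  have hb₂0 : 0 ≤ b₂ := trunc_nonneg' σ hσ p₂ hp2
  have ha₁1 : a₁ ≤ 1 / σ := trunc_le' σ hσ n₁ hn1
  have ha₂1 : a₂ ≤ 1 / σ := trunc_le' σ hσ n₂ hn2
  have hb₁1 : b₁ ≤ 1 / σ := trunc_le' σ hσ p₁ hp1
  have hb₂1 : b₂ ≤ 1 / σ := trunc_le' σ hσ p₂ hp2
  have La : |a₁ - a₂| ≤ |n₁ - n₂| := trunc_lip' σ hσ n₁ n₂ hn1 hn2
  have Lb : |b₁ - b₂| ≤ |p₁ - p₂| := trunc_lip' σ hσ p₁ p₂ hp1 hp2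
  clear_value a₁ a₂ b₁ b₂
  have hE : (0:ℝ) < Real.exp (-Vb) := Real.exp_pos _
  have hE2 : Real.exp (-Vb) * Real.exp (-Vb) = Real.exp (-2 * Vb) := by
    rw [← Real.exp_add]; ring_nf
  -- growth bound
  have hFg : |F a₁ b₁| ≤ c₂ * (1 + 2 / σ) := by
    refine (hF_growth a₁ b₁).trans ?_
    rw [abs_of_nonneg ha₁0, abs_of_nonneg hb₁0]
    apply mul_le_mul_of_nonneg_left _ hc₂.le
    have h2σ : 2 / σ = 1 / σ + 1 / σ := by ring
    linarith
  -- Lipschitz bound on F diff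
  have hFl : |F a₁ b₁ - F a₂ b₂| ≤ c₁ * (|a₁ - a₂| + |b₁ - b₂|) := hF_lip _ _ _ _
  -- product diff
  have hprod : |a₁ * b₁ - a₂ * b₂| ≤ (1 / σ) * (|a₁ - a₂| + |b₁ - b₂|) := by
    have h : a₁ * b₁ - a₂ * b₂ = a₁ * (b₁ - b₂) + b₂ * (a₁ - a₂) := by ring
    calc |a₁ * b₁ - a₂ * b₂| ≤ |a₁ * (b₁ - b₂)| + |b₂ * (a₁ - a₂)| := by
          rw [h]; exact abs_add_le _ _
      _ = a₁ * |b₁ - b₂| + b₂ * |a₁ - a₂| := by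
          rw [abs_mul, abs_mul, abs_of_nonneg ha₁0, abs_of_nonneg hb₂0]
      _ ≤ (1 / σ) * |b₁ - b₂| + (1 / σ) * |a₁ - a₂| :=
          add_le_add (mul_le_mul_of_nonneg_right ha₁1 (abs_nonneg _))
            (mul_le_mul_of_nonneg_right hb₂1 (abs_nonneg _))
      _ = (1 / σ) * (|a₁ - a₂| + |b₁ - b₂|) := by ring
  have hμμ : |a₂ * b₂ - μn * μp| ≤ 1 / σ ^ 2 + Real.exp (-2 * Vb) := by
    have h1 : a₂ * b₂ ≤ 1 / σ ^ 2 := by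
      have : (1:ℝ) / σ * (1 / σ) = 1 / σ ^ 2 := by ring
      nlinarith
    have h2 : μn * μp ≤ Real.exp (-2 * Vb) := by
      rw [← hE2]; exact mul_le_mul hμn.2 hμp.2 hμp.1 hE.le
    have h3 : 0 ≤ μn * μp := mul_nonneg hμn.1 hμp.1
    have h4 : 0 ≤ a₂ * b₂ := mul_nonneg ha₂0 hb₂0
    have h5 : (0:ℝ) < 1 / σ ^ 2 := by positivity
    have h6 : (0:ℝ) < Real.exp (-2 * Vb) := Real.exp_pos _
    rw [abs_sub_le_iff]
    constructor <;> linarith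
  have key : F a₁ b₁ * (a₁ * b₁ - μn * μp) - F a₂ b₂ * (a₂ * b₂ - μn * μp)
      = F a₁ b₁ * (a₁ * b₁ - a₂ * b₂) + (F a₁ b₁ - F a₂ b₂) * (a₂ * b₂ - μn * μp) := by ring
  have hΔ : |a₁ - a₂| + |b₁ - b₂| ≤ |n₁ - n₂| + |p₁ - p₂| := add_le_add La Lb
  have hσ2 : (0:ℝ) < 1 / σ := by positivity
  calc |F a₁ b₁ * (a₁ * b₁ - μn * μp) - F a₂ b₂ * (a₂ * b₂ - μn * μp)|
      ≤ |F a₁ b₁| * |a₁ * b₁ - a₂ * b₂| + |F a₁ b₁ - F a₂ b₂| * |a₂ * b₂ - μn * μp| := by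
        rw [key]
        refine (abs_add_le _ _).trans ?_
        rw [abs_mul, abs_mul]
    _ ≤ (c₂ * (1 + 2 / σ)) * ((1 / σ) * (|a₁ - a₂| + |b₁ - b₂|))
        + (c₁ * (|a₁ - a₂| + |b₁ - b₂|)) * (1 / σ ^ 2 + Real.exp (-2 * Vb)) := by
        exact add_le_add
          (mul_le_mul hFg hprod (abs_nonneg _) (by positivity))
          (mul_le_mul hFl hμμ (abs_nonneg _) (by positivity))
    _ = (c₂ * (1 + 2 / σ) * (1 / σ) + c₁ * (1 / σ ^ 2 + Real.exp (-2 * Vb))) *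
        (|a₁ - a₂| + |b₁ - b₂|) := by ring
    _ ≤ (c₂ * (1 + 2 / σ) * (1 / σ) + c₁ * (1 / σ ^ 2 + Real.exp (-2 * Vb))) *
        (|n₁ - n₂| + |p₁ - p₂|) := by
        apply mul_le_mul_of_nonneg_left hΔ
        positivity
    _ ≤ (2 * c₁ * Real.exp (-2 * Vb) + (2 * c₂ / σ) * (1 + 2 / σ) + 2 * c₁ / σ ^ 2) *
        (|n₁ - n₂| + |p₁ - p₂|) := by
        apply mul_le_mul_of_nonneg_right _ (by positivity)
        have hu : (0:ℝ) < 1 + 2 / σ := by positivity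
        have hv : (0:ℝ) < 1 / σ := by positivity
        have h1 : c₂ * (1 + 2 / σ) * (1 / σ) ≤ (2 * c₂ / σ) * (1 + 2 / σ) := by
          have h : (2 * c₂ / σ) * (1 + 2 / σ) = 2 * (c₂ * (1 + 2 / σ) * (1 / σ)) := by ring
          rw [h]
          linarith [mul_pos (mul_pos hc₂ hu) hv]
        have h2 : c₁ * (1 / σ ^ 2 + Real.exp (-2 * Vb)) ≤
            2 * c₁ * Real.exp (-2 * Vb) + 2 * c₁ / σ ^ 2 := by
          have hs2 : (0:ℝ) < 1 / σ ^ 2 := by positivity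
          have hE2p : (0:ℝ) < Real.exp (-2 * Vb) := Real.exp_pos _
          have e1 : c₁ * (1 / σ ^ 2 + Real.exp (-2 * Vb))
              = c₁ * (1 / σ ^ 2) + c₁ * Real.exp (-2 * Vb) := by ring
          have e2 : 2 * c₁ * Real.exp (-2 * Vb) = 2 * (c₁ * Real.exp (-2 * Vb)) := by ring
          have e3 : 2 * c₁ / σ ^ 2 = 2 * (c₁ * (1 / σ ^ 2)) := by ring
          rw [e1, e2, e3]
          linarith [mul_pos hc₁ hs2, mul_pos hc₁ hE2p]
        linarith
end
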